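/- For every y ∈ ℝ^m \ Z one has T(y) ⊆ I(y), and moreover I(y) is a bounded subset of (0,∞). -/

import Mathlib

/-- The Lyapunov derivative `V̇(y) = ⟪∇V(y), F(y)⟫`. -/
noncomputable def lyapDeriv {m : ℕ}
    (F : EuclideanSpace ℝ (Fin m) → EuclideanSpace ℝ (Fin m))
    (V : EuclideanSpace ℝ (Fin m) → ℝ) (y : EuclideanSpace ℝ (Fin m)) : ℝ :=
  inner ℝ (gradient V y) (F y)

/-- `f(y,η) = V(y + η F(y)) − V(y) − λ η V̇(y)`. -/
noncomputable def armijoGap {m : ℕ}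
    (F : EuclideanSpace ℝ (Fin m) → EuclideanSpace ℝ (Fin m))
    (V : EuclideanSpace ℝ (Fin m) → ℝ) (lam : ℝ)
    (y : EuclideanSpace ℝ (Fin m)) (η : ℝ) : ℝ :=
  V (y + η • F y) - V y - lam * η * lyapDeriv F V y

/-- `g(y,x) = |F(y)ᵀ ∇²V(y + x F(y)) F(y)|`, with the Hessian realized as the derivative of
the gradient. -/
noncomputable def hessQuad {m : ℕ}
    (F : EuclideanSpace ℝ (Fin m) → EuclideanSpace ℝ (Fin m))
    (V : EuclideanSpace ℝ (Fin m) → ℝ) (y : EuclideanSpace ℝ (Fin m)) (x : ℝ) : ℝ :=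
  |(inner ℝ (F y) ((fderiv ℝ (gradient V) (y + x • F y)) (F y)) : ℝ)|

/-- `q(y,η) = η (max_{x ∈ [0,η]} g(y,x) + 1) + 2(1−λ) V̇(y)`. -/
noncomputable def qMaj {m : ℕ}
    (F : EuclideanSpace ℝ (Fin m) → EuclideanSpace ℝ (Fin m))
    (V : EuclideanSpace ℝ (Fin m) → ℝ) (lam : ℝ)
    (y : EuclideanSpace ℝ (Fin m)) (η : ℝ) : ℝ :=
  η * (sSup (hessQuad F V y '' Set.Icc 0 η) + 1) + 2 * (1 - lam) * lyapDeriv F V y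

open InnerProductSpace Set

section Aux

variable {m : ℕ} (F : EuclideanSpace ℝ (Fin m) → EuclideanSpace ℝ (Fin m))
    (V : EuclideanSpace ℝ (Fin m) → ℝ)

lemma gradC1 (hV : ContDiff ℝ 2 V) : ContDiff ℝ 1 (gradient V) := by
  have : gradient V = fun x => (toDual ℝ _).symm (fderiv ℝ V x) := rfl
  rw [this]
  exact (toDual ℝ _).symm.contDiff.comp (hV.fderiv_right (by norm_num))

/-- Taylor-type bound via two applications of the mean value theorem. -/
lemma taylor_bound (hV : ContDiff ℝ 2 V) (y : EuclideanSpace ℝ (Fin m)) {η : ℝ} (hη : 0 < η) :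
    V (y + η • F y) - V y - η * lyapDeriv F V y ≤
      sSup (hessQuad F V y '' Set.Icc 0 η) * η ^ 2 / 2 := by
  set c := F y with hc
  set M := sSup (hessQuad F V y '' Set.Icc 0 η) with hM
  have hVd : Differentiable ℝ V := hV.differentiable (by norm_num)
  have hg1 : ContDiff ℝ 1 (gradient V) := gradC1 V hV
  have hgd : Differentiable ℝ (gradient V) := hg1.differentiable (by norm_num)
  -- the line
  have hL : ∀ t : ℝ, HasDerivAt (fun t : ℝ => y + t • c) c t := fun t => by
    simpa using ((hasDerivAt_id t).smul_const c).const_add y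
  set φ : ℝ → ℝ := fun t => V (y + t • c) with hφ
  set φ' : ℝ → ℝ := fun t => inner ℝ (c) (gradient V (y + t • c)) with hφ'
  set φ'' : ℝ → ℝ := fun t => inner ℝ c ((fderiv ℝ (gradient V) (y + t • c)) c) with hφ''
  have hDφ : ∀ t, HasDerivAt φ (φ' t) t := by
    intro t
    have h1 : HasDerivAt φ (fderiv ℝ V (y + t • c) c) t :=
      (hVd (y + t • c)).hasFDerivAt.comp_hasDerivAt t (hL t)
    have h2 : φ' t = fderiv ℝ V (y + t • c) c := by
      show (inner ℝ c (gradient V (y + t • c)) : ℝ) = _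
      rw [real_inner_comm]
      exact toDual_symm_apply
    rw [h2]; exact h1
  have hDφ' : ∀ t, HasDerivAt φ' (φ'' t) t := by
    intro t
    have h1 : HasDerivAt (fun t : ℝ => gradient V (y + t • c))
        ((fderiv ℝ (gradient V) (y + t • c)) c) t :=
      by have := (hgd (y + t • c)).hasFDerivAt.comp_hasDerivAt t (hL t); exact this
    exact (innerSL ℝ c).hasFDerivAt.comp_hasDerivAt t h1
  -- bound on φ''
  have hMbdd : BddAbove (hessQuad F V y '' Set.Icc 0 η) := by
    apply IsCompact.bddAbove_image isCompact_Icc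
    apply Continuous.continuousOn
    apply Continuous.abs
    exact (innerSL ℝ c).continuous.comp
      ((hg1.continuous_fderiv (by norm_num) |>.comp (by continuity)).clm_apply continuous_const)
  have hφ''le : ∀ t ∈ Set.Icc (0:ℝ) η, φ'' t ≤ M := by
    intro t ht
    calc φ'' t ≤ |φ'' t| := le_abs_self _
    _ = hessQuad F V y t := rfl
    _ ≤ M := le_csSup hMbdd (Set.mem_image_of_mem _ ht)
  -- the comparison function
  set ψ : ℝ → ℝ := fun t => φ t - t * φ' 0 - M * t ^ 2 / 2 with hψ
  have hDψ : ∀ t, HasDerivAt ψ (φ' t - φ' 0 - M * t) t := by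
    intro t
    have h1 : HasDerivAt (fun t : ℝ => t * φ' 0) (φ' 0) t := by
      simpa using (hasDerivAt_id t).mul_const (φ' 0)
    have h2 : HasDerivAt (fun t : ℝ => M * t ^ 2 / 2) (M * t) t := by
      have := ((hasDerivAt_pow 2 t).const_mul M).div_const 2
      simpa using this.congr_deriv (by ring)
    exact ((hDφ t).sub h1).sub h2
  have hψanti : AntitoneOn ψ (Set.Icc 0 η) := by
    apply antitoneOn_of_deriv_nonpos (convex_Icc 0 η)
    · exact fun t _ => ((hDψ t).continuousAt).continuousWithinAt
    · exact fun t _ => ((hDψ t).differentiableAt).differentiableWithinAt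
    · intro t ht
      rw [interior_Icc] at ht
      rw [(hDψ t).deriv]
      -- MVT for φ' on [0, t]
      obtain ⟨ξ, hξ, hξeq⟩ := exists_hasDerivAt_eq_slope φ' φ'' ht.1
        (fun s _ => (hDφ' s).continuousAt.continuousWithinAt)
        (fun s _ => hDφ' s)
      have hξIcc : ξ ∈ Set.Icc (0:ℝ) η :=
        ⟨hξ.1.le, hξ.2.le.trans ht.2.le⟩
      have ht0 : (t:ℝ) ≠ 0 := ht.1.ne'
      have : φ' t - φ' 0 = t * φ'' ξ := by
        rw [hξeq]; field_simp; ring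
      rw [this]
      have := hφ''le ξ hξIcc
      nlinarith [ht.1]
  have hkey : ψ η ≤ ψ 0 := hψanti (Set.left_mem_Icc.2 hη.le) (Set.right_mem_Icc.2 hη.le) hη.le
  have hψ0 : ψ 0 = V y := by simp [hψ, hφ]
  have hφ'0 : φ' 0 = lyapDeriv F V y := by
    show (inner ℝ c (gradient V (y + (0:ℝ) • c)) : ℝ) = _
    rw [zero_smul, add_zero, real_inner_comm]; rfl
  have hψη : ψ η = V (y + η • c) - η * φ' 0 - M * η ^ 2 / 2 := rfl
  rw [hψη, hψ0, hφ'0] at hkey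
  linarith

end Aux

/-- **Lemma (inclusion and boundedness).** For `y ∉ Z`, `T(y) ⊆ I(y)` and `I(y)` is a bounded
subset of `(0,∞)`, where `I(y) = {η > 0 | f(y,η) ≤ 0}` and `T(y) = {η > 0 | q(y,η) ≤ 0}`. -/
theorem T_subset_I_and_I_bounded
    {m : ℕ} (lam : ℝ) (hlam : lam ∈ Set.Ioo (0 : ℝ) 1)
    (F : EuclideanSpace ℝ (Fin m) → EuclideanSpace ℝ (Fin m))
    (V : EuclideanSpace ℝ (Fin m) → ℝ)
    (hF : Continuous F) (hV : ContDiff ℝ 2 V) (hV0 : ∀ y, 0 ≤ V y)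
    (hVdot : ∀ y, lyapDeriv F V y ≤ 0)
    (y : EuclideanSpace ℝ (Fin m)) (hy : lyapDeriv F V y ≠ 0) :
    {η : ℝ | 0 < η ∧ qMaj F V lam y η ≤ 0} ⊆ {η : ℝ | 0 < η ∧ armijoGap F V lam y η ≤ 0} ∧
    Bornology.IsBounded {η : ℝ | 0 < η ∧ armijoGap F V lam y η ≤ 0} ∧
    {η : ℝ | 0 < η ∧ armijoGap F V lam y η ≤ 0} ⊆ Set.Ioi 0 := by
  obtain ⟨hl0, hl1⟩ := hlam
  set L := lyapDeriv F V y with hL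
  have hVd0 : L < 0 := lt_of_le_of_ne (hVdot y) hy
  refine ⟨?_, ?_, fun η hη => hη.1⟩
  · rintro η ⟨hη, hq⟩
    refine ⟨hη, ?_⟩
    have htay := taylor_bound F V hV y hη
    set M := sSup (hessQuad F V y '' Set.Icc 0 η) with hMdef
    unfold armijoGap
    unfold qMaj at hq
    rw [← hL] at hq htay ⊢
    have h1 : η / 2 * (η * (M + 1) + 2 * (1 - lam) * L) ≤ 0 :=
      mul_nonpos_of_nonneg_of_nonpos (by positivity) hq
    nlinarith [sq_nonneg η]
  · have hb : {η : ℝ | 0 < η ∧ armijoGap F V lam y η ≤ 0} ⊆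
        Set.Icc 0 (V y / (lam * (-L))) := by
      rintro η ⟨hη, hf⟩
      have hpos : 0 < lam * (-L) := mul_pos hl0 (neg_pos.2 hVd0)
      refine ⟨hη.le, ?_⟩
      have h0 := hV0 (y + η • F y)
      unfold armijoGap at hf
      rw [← hL] at hf
      rw [le_div_iff₀ hpos]
      nlinarith
    exact (Metric.isBounded_Icc _ _).subset hb
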